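/- The characteristic function of the density k(x) = (1/√(2π)) e^{x/2} e^{-e^x/2} is given by φ_k(t) = (1/√π) · 2^{it} · Γ(1/2 + it), where Γ is the complex Gamma function. -/
import Mathlib

open Complex Real MeasureTheory

lemma mellin_step (t : ℝ) :
    mellin (fun u : ℝ ↦ ((Real.exp (-u / 2) : ℝ) : ℂ)) (1 / 2 + Complex.I * t) =
      (2 : ℂ) ^ ((1 / 2 : ℂ) + Complex.I * t) * Complex.Gamma (1 / 2 + Complex.I * t) := by
  have h : (fun u : ℝ ↦ ((Real.exp (-u / 2) : ℝ) : ℂ)) =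
      fun u : ℝ ↦ ((Real.exp (-((1/2 : ℝ) * u)) : ℝ) : ℂ) := by
    ext u; ring_nf
  rw [h, mellin_comp_mul_left (fun u : ℝ ↦ ((Real.exp (-u) : ℝ) : ℂ)) _ (by norm_num : (0:ℝ) < 1/2),
    ← Complex.GammaIntegral_eq_mellin, ← Complex.Gamma_eq_integral (by simp : 0 < ((1:ℂ)/2 + Complex.I * t).re)]
  push_cast
  rw [smul_eq_mul]
  congr 1
  rw [show ((1:ℂ)/2) = (2:ℂ)⁻¹ by norm_num, inv_cpow _ _ (by
    simp [Complex.arg_ofReal_of_nonneg]; positivity), ← cpow_neg, neg_neg]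

lemma subst_step (t : ℝ) :
    mellin (fun u : ℝ ↦ ((Real.exp (-u / 2) : ℝ) : ℂ)) (1 / 2 + Complex.I * t) =
      ∫ x : ℝ, Complex.exp (Complex.I * t * x) *
        ((Real.exp (x / 2) * Real.exp (-Real.exp x / 2) : ℝ) : ℂ) := by
  set s : ℂ := 1 / 2 + Complex.I * t with hs
  have himg : Real.exp '' Set.univ = Set.Ioi 0 := by
    rw [Set.image_univ, Real.range_exp]
  have key := integral_image_eq_integral_abs_deriv_smul MeasurableSet.univ
    (fun x _ ↦ (Real.hasDerivAt_exp x).hasDerivWithinAt)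
    (Real.exp_injective.injOn)
    (fun u : ℝ ↦ (u : ℂ) ^ (s - 1) • ((Real.exp (-u / 2) : ℝ) : ℂ))
  rw [himg] at key
  rw [mellin, key, MeasureTheory.setIntegral_univ]
  congr 1
  ext x
  have h1 : ((Real.exp x : ℝ) : ℂ) = Complex.exp x := by
    rw [Complex.ofReal_exp]
  have h2 : ((Real.exp x : ℝ) : ℂ) ^ (s - 1) = Complex.exp ((s - 1) * x) := by
    rw [h1, Complex.cpow_def_of_ne_zero (Complex.exp_ne_zero _),
      Complex.log_exp (by norm_num [Real.pi_pos]) (by norm_num [Real.pi_nonneg]), mul_comm]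
  rw [abs_of_pos (Real.exp_pos x), h2, Complex.real_smul, smul_eq_mul, h1, ← mul_assoc,
    ← Complex.exp_add]
  rw [show (x:ℂ) + (s-1)*x = Complex.I*t*x + ((x/2 : ℝ) : ℂ) by rw [hs]; push_cast; ring,
    Complex.exp_add, ← Complex.ofReal_exp]
  push_cast
  ring

/-- The characteristic function of the density `k(x) = (1/√(2π)) e^{x/2} e^{-e^x/2}`
is `φ_k(t) = (1/√π) 2^{it} Γ(1/2 + it)`. -/
theorem charFun_log_chi_sq (t : ℝ) :
    ∫ x : ℝ, Complex.exp (Complex.I * t * x) *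
        ((1 / Real.sqrt (2 * π) * Real.exp (x / 2) * Real.exp (-Real.exp x / 2) : ℝ) : ℂ) =
      (1 / Real.sqrt π : ℝ) * (2 : ℂ) ^ (Complex.I * t) *
        Complex.Gamma (1 / 2 + Complex.I * t) := by
  have heq : ∀ x : ℝ, Complex.exp (Complex.I * t * x) *
        ((1 / Real.sqrt (2 * π) * Real.exp (x / 2) * Real.exp (-Real.exp x / 2) : ℝ) : ℂ) =
      ((1 / Real.sqrt (2 * π) : ℝ) : ℂ) * (Complex.exp (Complex.I * t * x) *
        ((Real.exp (x / 2) * Real.exp (-Real.exp x / 2) : ℝ) : ℂ)) := by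
    intro x; push_cast; ring
  simp_rw [heq]
  rw [MeasureTheory.integral_const_mul, ← subst_step, mellin_step]
  have h2 : (2 : ℂ) ^ ((1/2 : ℂ) + Complex.I * t) =
      ((Real.sqrt 2 : ℝ) : ℂ) * (2 : ℂ) ^ (Complex.I * t) := by
    rw [Complex.cpow_add _ _ two_ne_zero]
    congr 1
    rw [Real.sqrt_eq_rpow, Complex.ofReal_cpow (by norm_num)]
    push_cast
    ring
  rw [h2]
  have h3 : (1 / Real.sqrt (2 * π) : ℝ) * Real.sqrt 2 = 1 / Real.sqrt π := by
    rw [Real.sqrt_mul (by norm_num)]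
    field_simp
  rw [show ((1 / Real.sqrt (2 * π) : ℝ) : ℂ) * (((Real.sqrt 2 : ℝ) : ℂ) *
      (2:ℂ) ^ (Complex.I * t) * Complex.Gamma (1/2 + Complex.I * t)) =
    (((1 / Real.sqrt (2 * π) : ℝ) * Real.sqrt 2 : ℝ) : ℂ) *
      (2:ℂ) ^ (Complex.I * t) * Complex.Gamma (1/2 + Complex.I * t) by push_cast; ring, h3]
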